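/- Let ε be a real random variable with E ε = 0, E ε⁴ = v < ∞, and let b be a real constant with |b| ≤ τ/2 for some τ > 0. Set u = b + ε and ξ = ψ_τ(u) where ψ_τ(x) = sign(x)·min(|x|, τ). Then |E ξ − b| ≤ min(2σ²/τ, 8v/τ³), where σ² = E ε². -/

import Mathlib

open MeasureTheory

/-- Truncation operator ψ_τ(u) = sign(u)·min(|u|, τ). -/
noncomputable def psi (τ u : ℝ) : ℝ := Real.sign u * min |u| τ

lemma psi_eq_clamp (τ u : ℝ) (hτ : 0 ≤ τ) : psi τ u = max (-τ) (min u τ) := by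
  rcases lt_trichotomy u 0 with h | h | h
  · rw [psi, Real.sign_of_neg h, abs_of_neg h, min_eq_left (h.le.trans hτ),
      neg_one_mul, ← max_neg_neg, neg_neg, max_comm]
  · simp [psi, h, max_eq_right (neg_nonpos_of_nonneg hτ |>.trans hτ), hτ,
      min_eq_left hτ]
  · have hle : -τ ≤ min u τ := le_min (by linarith) (by linarith)
    rw [psi, Real.sign_of_pos h, abs_of_pos h, one_mul, max_eq_right hle]

lemma abs_psi_sub (τ u : ℝ) (hτ : 0 ≤ τ) : |psi τ u - u| ≤ max 0 (|u| - τ) := by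
  rw [psi_eq_clamp τ u hτ]
  rcases le_or_gt u (-τ) with h | h
  · rw [min_eq_left (h.trans (neg_nonpos_of_nonneg hτ |>.trans hτ)),
      max_eq_left h, abs_of_nonpos (by linarith : u ≤ 0)]
    have : |(-τ) - u| = -u - τ := by
      rw [abs_of_nonneg (by linarith)]; ring
    rw [this]
    exact le_max_right _ _
  · rcases le_or_gt u τ with h2 | h2
    · rw [min_eq_left h2, max_eq_right h.le, sub_self, abs_zero]
      exact le_max_left _ _
    · rw [min_eq_right h2.le, max_eq_right (by linarith),
        abs_of_nonpos (by linarith), abs_of_pos (by linarith)]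
      have : -(τ - u) = u - τ := by ring
      rw [this]
      exact le_max_right _ _

lemma max_sub_le_sq (x c : ℝ) (hx : 0 ≤ x) (hc : 0 < c) :
    max 0 (x - c) ≤ x ^ 2 / c := by
  rcases le_or_gt x c with h | h
  · rw [max_eq_left (by linarith)]; positivity
  · rw [max_eq_right (by linarith), le_div_iff₀ hc]
    nlinarith

lemma max_sub_le_pow4 (x c : ℝ) (hx : 0 ≤ x) (hc : 0 < c) :
    max 0 (x - c) ≤ x ^ 4 / c ^ 3 := by
  rcases le_or_gt x c with h | h
  · rw [max_eq_left (by linarith)]; positivity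
  · rw [max_eq_right (by linarith), le_div_iff₀ (by positivity)]
    nlinarith [pow_le_pow_left₀ hc.le h.le 3, mul_pos hc (mul_pos hc hc), hc, h]

theorem stmt15 {Ω : Type*} [MeasurableSpace Ω] (μ : Measure Ω) [IsProbabilityMeasure μ]
    (ε : Ω → ℝ) (hmeas : Measurable ε)
    (h1 : Integrable ε μ) (h2 : Integrable (fun ω => (ε ω) ^ 2) μ)
    (h4 : Integrable (fun ω => (ε ω) ^ 4) μ)
    (hzero : ∫ ω, ε ω ∂μ = 0)
    (τ b : ℝ) (hτ : 0 < τ) (hb : |b| ≤ τ / 2) :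
    |(∫ ω, psi τ (b + ε ω) ∂μ) - b|
      ≤ min (2 * (∫ ω, (ε ω) ^ 2 ∂μ) / τ) (8 * (∫ ω, (ε ω) ^ 4 ∂μ) / τ ^ 3) := by
  have hτ2 : (0:ℝ) < τ / 2 := by linarith
  -- measurability and integrability of the truncated variable
  have hpsim : Measurable fun ω => psi τ (b + ε ω) := by
    have : (fun ω => psi τ (b + ε ω)) = fun ω => max (-τ) (min (b + ε ω) τ) := by
      funext ω; exact psi_eq_clamp τ _ hτ.le
    rw [this]
    exact measurable_const.max ((measurable_const.add hmeas).min measurable_const)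
  have hpsibdd : ∀ ω, |psi τ (b + ε ω)| ≤ τ := by
    intro ω
    rw [psi_eq_clamp τ _ hτ.le, abs_le]
    constructor
    · exact le_max_left _ _
    · exact max_le (by linarith) (min_le_right _ _)
  have hpsiint : Integrable (fun ω => psi τ (b + ε ω)) μ := by
    refine (integrable_const τ).mono hpsim.aestronglyMeasurable ?_
    filter_upwards with ω
    simpa [Real.norm_eq_abs, abs_of_pos hτ] using hpsibdd ω
  have hu : Integrable (fun ω => b + ε ω) μ := (integrable_const b).add h1
  -- rewrite the difference as an integral
  have hkey : (∫ ω, psi τ (b + ε ω) ∂μ) - b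
      = ∫ ω, (psi τ (b + ε ω) - (b + ε ω)) ∂μ := by
    rw [integral_sub hpsiint hu, integral_add (integrable_const b) h1, hzero,
      integral_const]
    simp
  -- pointwise bound
  have hpt : ∀ ω, |psi τ (b + ε ω) - (b + ε ω)| ≤ max 0 (|ε ω| - τ / 2) := by
    intro ω
    refine (abs_psi_sub τ _ hτ.le).trans (max_le_max le_rfl ?_)
    have : |b + ε ω| ≤ |b| + |ε ω| := abs_add_le _ _
    linarith
  have hfint : Integrable (fun ω => psi τ (b + ε ω) - (b + ε ω)) μ :=
    hpsiint.sub hu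
  have habs : |(∫ ω, psi τ (b + ε ω) ∂μ) - b|
      ≤ ∫ ω, |psi τ (b + ε ω) - (b + ε ω)| ∂μ := by
    rw [hkey]
    simpa [Real.norm_eq_abs] using
      norm_integral_le_integral_norm (fun ω => psi τ (b + ε ω) - (b + ε ω)) (μ := μ)
  refine le_min ?_ ?_
  · refine habs.trans ?_
    have : ∫ ω, |psi τ (b + ε ω) - (b + ε ω)| ∂μ
        ≤ ∫ ω, (ε ω) ^ 2 / (τ / 2) ∂μ := by
      refine integral_mono hfint.abs (h2.div_const _) ?_
      intro ω
      refine (hpt ω).trans ?_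
      have := max_sub_le_sq (|ε ω|) (τ / 2) (abs_nonneg _) hτ2
      simpa [sq_abs] using this
    refine this.trans (le_of_eq ?_)
    rw [integral_div]
    field_simp
  · refine habs.trans ?_
    have : ∫ ω, |psi τ (b + ε ω) - (b + ε ω)| ∂μ
        ≤ ∫ ω, (ε ω) ^ 4 / (τ / 2) ^ 3 ∂μ := by
      refine integral_mono hfint.abs (h4.div_const _) ?_
      intro ω
      refine (hpt ω).trans ?_
      have h' := max_sub_le_pow4 (|ε ω|) (τ / 2) (abs_nonneg _) hτ2
      have he : |ε ω| ^ 4 = (ε ω) ^ 4 := by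
        rw [pow_abs, abs_of_nonneg (by positivity)]
      rwa [he] at h' 
    refine this.trans (le_of_eq ?_)
    rw [integral_div]
    field_simp
    ring
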